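/- arXiv:1506.02935 — 2 statements merged into one kernel-verified Lean document; each statement's English description precedes it below -/
import Mathlib

section
/- Let F be a strictly increasing continuous distribution function on ℝ and p the Borel probability measure it defines. Then the set D_F ⊆ ℝ^ℕ of all p-equidistributed sequences is a Borel set with p^ℕ(D_F) = 1. -/
open MeasureTheory Filter Topology

/-- Extension of a distribution function `F` to `EReal`, with value `0` at `-∞`
and `1` at `+∞`. -/
noncomputable def cdfExt (F : ℝ → ℝ) : EReal → ℝ := fun a =>
  if a = ⊥ then 0 else if a = ⊤ then 1 else F a.toReal

/-- A sequence `(xₖ)` of reals is `p`-equidistributed (for the measure `p` with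
distribution function `F`) if for every interval `[a,b]` with endpoints possibly `±∞`,
the asymptotic proportion of the first `n` terms lying in `[a,b]` is `F(b) - F(a)`. -/
noncomputable def IsEquidistributedWRT (F : ℝ → ℝ) (x : ℕ → ℝ) : Prop :=
  ∀ a b : EReal, a ≤ b →
    Tendsto (fun n : ℕ =>
        (((Finset.range n).filter
            (fun k => a ≤ (x k : EReal) ∧ (x k : EReal) ≤ b)).card : ℝ) / n)
      atTop (nhds (cdfExt F b - cdfExt F a))

/-- `ν` is the countable power `p^ℕ` of `p`. -/
def IsInfinitePower {X : Type*} [MeasurableSpace X] (μ : Measure X)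
    (ν : Measure (ℕ → X)) : Prop :=
  IsProbabilityMeasure ν ∧
    ∀ n : ℕ, ν.map (fun x (i : Fin n) => x (i : ℕ)) = Measure.pi (fun _ : Fin n => μ)

namespace EquidistAux

@[simp] lemma cdfExt_bot (F : ℝ → ℝ) : cdfExt F ⊥ = 0 := by simp [cdfExt]

@[simp] lemma cdfExt_top (F : ℝ → ℝ) : cdfExt F ⊤ = 1 := by simp [cdfExt]

@[simp] lemma cdfExt_coe (F : ℝ → ℝ) (t : ℝ) : cdfExt F (t : EReal) = F t := by
  simp [cdfExt, EReal.coe_ne_bot, EReal.coe_ne_top]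

/-- count of the first `n` terms that are `≤ t`. -/
noncomputable def cntLe (x : ℕ → ℝ) (t : ℝ) (n : ℕ) : ℕ :=
  ((Finset.range n).filter (fun k => x k ≤ t)).card

/-- count of the first `n` terms that are `< t`. -/
noncomputable def cntLt (x : ℕ → ℝ) (t : ℝ) (n : ℕ) : ℕ :=
  ((Finset.range n).filter (fun k => x k < t)).card

lemma cntLe_mono (x : ℕ → ℝ) {s t : ℝ} (h : s ≤ t) (n : ℕ) :
    cntLe x s n ≤ cntLe x t n := by
  refine Finset.card_le_card (fun k hk => ?_)
  simp only [Finset.mem_filter] at *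
  exact ⟨hk.1, hk.2.trans h⟩

lemma cntLe_le (x : ℕ → ℝ) (t : ℝ) (n : ℕ) : cntLe x t n ≤ n := by
  simpa [cntLe] using (Finset.card_filter_le (Finset.range n) _)

lemma cntLt_le_cntLe (x : ℕ → ℝ) {s t : ℝ} (h : s ≤ t) (n : ℕ) :
    cntLt x s n ≤ cntLe x t n := by
  refine Finset.card_le_card (fun k hk => ?_)
  simp only [Finset.mem_filter] at *
  exact ⟨hk.1, le_of_lt (lt_of_lt_of_le hk.2 h)⟩

lemma cntLe_le_cntLt (x : ℕ → ℝ) {s t : ℝ} (h : s < t) (n : ℕ) :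
    cntLe x s n ≤ cntLt x t n := by
  refine Finset.card_le_card (fun k hk => ?_)
  simp only [Finset.mem_filter] at *
  exact ⟨hk.1, lt_of_le_of_lt hk.2 h⟩

lemma tendsto_of_eventually_bounds {f : ℕ → ℝ} {L : ℝ}
    (h : ∀ ε : ℝ, 0 < ε → ∀ᶠ n in atTop, L - ε ≤ f n ∧ f n ≤ L + ε) :
    Tendsto f atTop (𝓝 L) := by
  rw [Metric.tendsto_atTop]
  intro ε hε
  obtain ⟨N, hN⟩ := eventually_atTop.mp (h (ε / 2) (by linarith))
  refine ⟨N, fun n hn => ?_⟩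
  obtain ⟨h1, h2⟩ := hN n hn
  rw [Real.dist_eq, abs_sub_lt_iff]
  constructor <;> linarith

section Analytic

variable {F : ℝ → ℝ} {x : ℕ → ℝ}

lemma tendsto_cntLe (hFmono : Monotone F) (hFcont : Continuous F)
    (H : ∀ q : ℚ, Tendsto (fun n => (cntLe x q n : ℝ) / n) atTop (𝓝 (F q)))
    (t : ℝ) : Tendsto (fun n => (cntLe x t n : ℝ) / n) atTop (𝓝 (F t)) := by
  apply tendsto_of_eventually_bounds
  intro ε hε
  obtain ⟨δ, hδ, hδ'⟩ := Metric.continuousAt_iff.mp hFcont.continuousAt (ε / 2) (by linarith)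
  obtain ⟨q, hq1, hq2⟩ := exists_rat_btwn (show t - δ < t by linarith)
  obtain ⟨q', hq'1, hq'2⟩ := exists_rat_btwn (show t < t + δ by linarith)
  have hFq : F t - ε / 2 ≤ F q := by
    have := hδ' (x := (q : ℝ)) (by rw [Real.dist_eq, abs_sub_lt_iff]; constructor <;> linarith)
    rw [Real.dist_eq, abs_sub_lt_iff] at this
    linarith [this.2]
  have hFq' : F q' ≤ F t + ε / 2 := by
    have := hδ' (x := (q' : ℝ)) (by rw [Real.dist_eq, abs_sub_lt_iff]; constructor <;> linarith)
    rw [Real.dist_eq, abs_sub_lt_iff] at this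
    linarith [this.1]
  have h1 : ∀ᶠ n in atTop, F q - ε / 2 < (cntLe x q n : ℝ) / n :=
    (H q).eventually (eventually_gt_nhds (by linarith))
  have h2 : ∀ᶠ n in atTop, (cntLe x q' n : ℝ) / n < F q' + ε / 2 :=
    (H q').eventually (eventually_lt_nhds (by linarith))
  filter_upwards [h1, h2] with n h1 h2
  have hl : (cntLe x q n : ℝ) / n ≤ (cntLe x t n : ℝ) / n := by
    gcongr
    exact_mod_cast cntLe_mono x (le_of_lt hq2) n
  have hu : (cntLe x t n : ℝ) / n ≤ (cntLe x q' n : ℝ) / n := by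
    gcongr
    exact_mod_cast cntLe_mono x (le_of_lt hq'1) n
  constructor <;> linarith

lemma tendsto_cntLt (hFmono : Monotone F) (hFcont : Continuous F)
    (H : ∀ q : ℚ, Tendsto (fun n => (cntLe x q n : ℝ) / n) atTop (𝓝 (F q)))
    (t : ℝ) : Tendsto (fun n => (cntLt x t n : ℝ) / n) atTop (𝓝 (F t)) := by
  apply tendsto_of_eventually_bounds
  intro ε hε
  obtain ⟨δ, hδ, hδ'⟩ := Metric.continuousAt_iff.mp hFcont.continuousAt (ε / 2) (by linarith)
  obtain ⟨q, hq1, hq2⟩ := exists_rat_btwn (show t - δ < t by linarith)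
  have hFq : F t - ε / 2 ≤ F q := by
    have := hδ' (x := (q : ℝ)) (by rw [Real.dist_eq, abs_sub_lt_iff]; constructor <;> linarith)
    rw [Real.dist_eq, abs_sub_lt_iff] at this
    linarith [this.2]
  have h1 : ∀ᶠ n in atTop, F q - ε / 2 < (cntLe x q n : ℝ) / n :=
    (H q).eventually (eventually_gt_nhds (by linarith))
  have h2 : ∀ᶠ n in atTop, (cntLe x t n : ℝ) / n < F t + ε :=
    (tendsto_cntLe hFmono hFcont H t).eventually (eventually_lt_nhds (by linarith))
  filter_upwards [h1, h2] with n h1 h2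
  have hl : (cntLe x q n : ℝ) / n ≤ (cntLt x t n : ℝ) / n := by
    gcongr
    exact_mod_cast cntLe_le_cntLt x hq2 n
  have hu : (cntLt x t n : ℝ) / n ≤ (cntLe x t n : ℝ) / n := by
    gcongr
    exact_mod_cast cntLt_le_cntLe x le_rfl n
  constructor <;> linarith

lemma tendsto_nat_div_self : Tendsto (fun n : ℕ => (n : ℝ) / n) atTop (𝓝 1) := by
  apply Tendsto.congr' _ tendsto_const_nhds
  filter_upwards [eventually_ge_atTop 1] with n hn
  rw [div_self]
  exact_mod_cast Nat.pos_of_ne_zero (by omega) |>.ne'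

lemma isEquidistributed_iff {F : ℝ → ℝ} (hFmono : Monotone F) (hFcont : Continuous F)
    (x : ℕ → ℝ) :
    IsEquidistributedWRT F x ↔
      ∀ q : ℚ, Tendsto (fun n => (cntLe x q n : ℝ) / n) atTop (𝓝 (F q)) := by
  have filter_le : ∀ (t : ℝ) (n : ℕ),
      ((Finset.range n).filter
        (fun k => (⊥ : EReal) ≤ (x k : EReal) ∧ (x k : EReal) ≤ (t : EReal))).card
        = cntLe x t n := by
    intro t n
    unfold cntLe
    congr 1
    apply Finset.filter_congr
    intro k _
    simp [EReal.coe_le_coe_iff]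
  constructor
  · intro h q
    have := h ⊥ ((q : ℝ) : EReal) bot_le
    simp only [cdfExt_bot, cdfExt_coe, sub_zero] at this
    refine this.congr fun n => ?_
    rw [filter_le]
  · intro H a b hab
    induction a using EReal.rec with
    | bot =>
      induction b using EReal.rec with
      | bot =>
        have he : ∀ n : ℕ, ((Finset.range n).filter
            (fun k => (⊥ : EReal) ≤ (x k : EReal) ∧ (x k : EReal) ≤ (⊥ : EReal))).card = 0 := by
          intro n
          rw [Finset.card_eq_zero]
          apply Finset.filter_false_of_mem
          intro k _
          simp
        simp only [he, Nat.cast_zero, zero_div, cdfExt_bot, sub_self]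
        exact tendsto_const_nhds
      | coe t =>
        simp only [cdfExt_bot, cdfExt_coe, sub_zero, filter_le]
        exact tendsto_cntLe hFmono hFcont H t
      | top =>
        have he : ∀ n : ℕ, ((Finset.range n).filter
            (fun k => (⊥ : EReal) ≤ (x k : EReal) ∧ (x k : EReal) ≤ (⊤ : EReal))).card = n := by
          intro n
          rw [Finset.filter_true_of_mem, Finset.card_range]
          intro k _
          simp
        simp only [he, cdfExt_bot, cdfExt_top, sub_zero]
        exact tendsto_nat_div_self
    | coe s =>
      induction b using EReal.rec with
      | bot => simp at hab
      | coe t =>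
        rw [EReal.coe_le_coe_iff] at hab
        have he : ∀ n : ℕ, ((Finset.range n).filter
            (fun k => ((s : ℝ) : EReal) ≤ (x k : EReal) ∧ (x k : EReal) ≤ ((t : ℝ) : EReal))).card
            = cntLe x t n - cntLt x s n := by
          intro n
          unfold cntLe cntLt
          rw [← Finset.card_sdiff_of_subset]
          · congr 1
            ext k
            simp only [Finset.mem_filter, Finset.mem_sdiff, EReal.coe_le_coe_iff, not_lt]
            constructor
            · rintro ⟨hk, h1, h2⟩
              exact ⟨⟨hk, h2⟩, fun h' => absurd h1 (not_le.mpr (h'.2))⟩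
            · rintro ⟨⟨hk, h2⟩, h1⟩
              refine ⟨hk, ?_, h2⟩
              by_contra hc
              exact h1 ⟨hk, not_le.mp hc⟩
          · intro k hk
            simp only [Finset.mem_filter] at *
            exact ⟨hk.1, (le_of_lt hk.2).trans hab⟩
        have hsub : ∀ n : ℕ, cntLt x s n ≤ cntLe x t n := fun n => cntLt_le_cntLe x hab n
        have heq : (fun n : ℕ => ((cntLe x t n - cntLt x s n : ℕ) : ℝ) / n)
            = fun n : ℕ => (cntLe x t n : ℝ) / n - (cntLt x s n : ℝ) / n := by
          funext n
          rw [Nat.cast_sub (hsub n), sub_div]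
        simp only [he, cdfExt_coe, heq]
        exact (tendsto_cntLe hFmono hFcont H t).sub (tendsto_cntLt hFmono hFcont H s)
      | top =>
        have he : ∀ n : ℕ, ((Finset.range n).filter
            (fun k => ((s : ℝ) : EReal) ≤ (x k : EReal) ∧ (x k : EReal) ≤ (⊤ : EReal))).card
            = n - cntLt x s n := by
          intro n
          unfold cntLt
          have hset : (Finset.range n).filter
              (fun k => ((s : ℝ) : EReal) ≤ (x k : EReal) ∧ (x k : EReal) ≤ (⊤ : EReal))
              = Finset.range n \ (Finset.range n).filter (fun k => x k < s) := by
            ext k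
            simp only [Finset.mem_filter, Finset.mem_sdiff, EReal.coe_le_coe_iff, not_lt,
              le_top, and_true]
            constructor
            · rintro ⟨hk, h1⟩
              exact ⟨hk, fun h' => absurd h1 (not_le.mpr h'.2)⟩
            · rintro ⟨hk, h1⟩
              refine ⟨hk, ?_⟩
              by_contra hc
              exact h1 ⟨hk, not_le.mp hc⟩
          rw [hset, Finset.card_sdiff_of_subset (Finset.filter_subset _ _), Finset.card_range]
        have heq : (fun n : ℕ => ((n - cntLt x s n : ℕ) : ℝ) / n)
            = fun n : ℕ => (n : ℝ) / n - (cntLt x s n : ℝ) / n := by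
          funext n
          rw [Nat.cast_sub (by simpa [cntLt] using Finset.card_filter_le (Finset.range n) _),
            sub_div]
        simp only [he, cdfExt_coe, cdfExt_top, heq]
        exact tendsto_nat_div_self.sub (tendsto_cntLt hFmono hFcont H s)
    | top =>
      rw [top_le_iff] at hab
      subst hab
      have he : ∀ n : ℕ, ((Finset.range n).filter
          (fun k => (⊤ : EReal) ≤ (x k : EReal) ∧ (x k : EReal) ≤ (⊤ : EReal))).card = 0 := by
        intro n
        rw [Finset.card_eq_zero]
        apply Finset.filter_false_of_mem
        intro k _
        simp only [top_le_iff, le_top, and_true]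
        exact fun h => EReal.coe_ne_top _ h
      simp only [he, Nat.cast_zero, zero_div, sub_self]
      exact tendsto_const_nhds

end Analytic


section Measure

open ProbabilityTheory

variable {p : Measure ℝ} {ν : Measure (ℕ → ℝ)}

lemma measurable_proj (n : ℕ) : Measurable (fun (x : ℕ → ℝ) (i : Fin n) => x (i : ℕ)) :=
  measurable_pi_lambda _ fun i => measurable_pi_apply _

lemma marginal (hν : IsInfinitePower p ν) [IsProbabilityMeasure p]
    (k : ℕ) {A : Set ℝ} (hA : MeasurableSet A) :
    ν ((fun x => x k) ⁻¹' A) = p A := by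
  have hi : k < k + 1 := Nat.lt_succ_self k
  set i : Fin (k + 1) := ⟨k, hi⟩ with hidef
  have hset : (fun x : ℕ → ℝ => x k) ⁻¹' A
      = (fun (x : ℕ → ℝ) (j : Fin (k + 1)) => x (j : ℕ)) ⁻¹'
        (Set.univ.pi fun j => if j = i then A else Set.univ) := by
    ext x
    simp only [Set.mem_preimage, Set.mem_pi, Set.mem_univ, true_implies]
    constructor
    · intro hx j
      by_cases hj : j = i
      · subst hj; simpa using hx
      · simp [hj]
    · intro hx
      have := hx i
      simpa using this
  rw [hset, ← Measure.map_apply (measurable_proj _) (MeasurableSet.univ_pi fun j => by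
      by_cases hj : j = i <;> simp [hj, hA]), hν.2 (k + 1), Measure.pi_pi]
  rw [Finset.prod_eq_single i (fun j _ hj => by simp [hj]) (by simp)]
  simp

lemma map_eval (hν : IsInfinitePower p ν) [IsProbabilityMeasure p] (k : ℕ) :
    ν.map (fun x => x k) = p :=
  Measure.ext fun A hA => by
    rw [Measure.map_apply (measurable_pi_apply k) hA, marginal hν k hA]

lemma indep_eval (hν : IsInfinitePower p ν) [IsProbabilityMeasure p]
    {i j : ℕ} (hij : i ≠ j) :
    IndepFun (fun x : ℕ → ℝ => x i) (fun x : ℕ → ℝ => x j) ν := by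
  haveI := hν.1
  rw [indepFun_iff_measure_inter_preimage_eq_mul]
  intro A B hA hB
  have hi : i < max i j + 1 := Nat.lt_succ_of_le (le_max_left i j)
  have hj : j < max i j + 1 := Nat.lt_succ_of_le (le_max_right i j)
  set n := max i j + 1
  set i' : Fin n := ⟨i, hi⟩ with hi'def
  set j' : Fin n := ⟨j, hj⟩ with hj'def
  have hij' : i' ≠ j' := by
    simp only [hi'def, hj'def, Ne, Fin.mk.injEq]
    exact hij
  have hset : (fun x : ℕ → ℝ => x i) ⁻¹' A ∩ (fun x : ℕ → ℝ => x j) ⁻¹' B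
      = (fun (x : ℕ → ℝ) (l : Fin n) => x (l : ℕ)) ⁻¹'
        (Set.univ.pi fun l => if l = i' then A else if l = j' then B else Set.univ) := by
    ext x
    simp only [Set.mem_inter_iff, Set.mem_preimage, Set.mem_pi, Set.mem_univ, true_implies]
    constructor
    · rintro ⟨h1, h2⟩ l
      by_cases h : l = i'
      · subst h; simpa using h1
      · by_cases h' : l = j'
        · subst h'; simpa [h] using h2
        · simp [h, h']
    · intro hx
      constructor
      · have := hx i'
        simpa using this
      · have := hx j'
        simpa [hij'.symm] using this
  have hmeas : MeasurableSet
      (Set.univ.pi fun l : Fin n => if l = i' then A else if l = j' then B else Set.univ) :=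
    MeasurableSet.univ_pi fun l => by
      by_cases h : l = i' <;> by_cases h' : l = j' <;> simp [h, h', hA, hB, hij'.symm]
  rw [hset, ← Measure.map_apply (measurable_proj n) hmeas, hν.2 n, Measure.pi_pi,
    marginal hν i hA, marginal hν j hB]
  have hval : ∀ l : Fin n, p (if l = i' then A else if l = j' then B else Set.univ)
      = if l = i' then p A else if l = j' then p B else 1 := fun l => by
    by_cases h : l = i' <;> by_cases h' : l = j' <;> simp [h, h', hij'.symm]
  simp_rw [hval]
  rw [← Finset.prod_subset (Finset.subset_univ ({i', j'} : Finset (Fin n)))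
      (fun l _ hl => by
        simp only [Finset.mem_insert, Finset.mem_singleton, not_or] at hl
        simp [hl.1, hl.2]),
    Finset.prod_pair hij']
  simp [hij'.symm]

lemma identDistrib_eval (hν : IsInfinitePower p ν) [IsProbabilityMeasure p] (k : ℕ) :
    IdentDistrib (fun x : ℕ → ℝ => x k) (fun x : ℕ → ℝ => x 0) ν ν :=
  ⟨(measurable_pi_apply k).aemeasurable, (measurable_pi_apply 0).aemeasurable,
    by rw [map_eval hν k, map_eval hν 0]⟩

end Measure

end EquidistAux

/-- The set of `p`-equidistributed sequences is Borel and has full `p^ℕ`-measure. -/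
theorem measurableSet_and_measure_equidistributedWRT_eq_one
    (F : ℝ → ℝ) (hFmono : StrictMono F) (hFcont : Continuous F)
    (hF0 : Tendsto F atBot (nhds 0)) (hF1 : Tendsto F atTop (nhds 1))
    (p : Measure ℝ) (hp : ∀ t, p (Set.Iic t) = ENNReal.ofReal (F t))
    (ν : Measure (ℕ → ℝ)) (hν : IsInfinitePower p ν) :
    MeasurableSet {x : ℕ → ℝ | IsEquidistributedWRT F x} ∧
      ν {x : ℕ → ℝ | IsEquidistributedWRT F x} = 1 := by
  classical
  haveI : IsProbabilityMeasure ν := hν.1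
  -- `p` is a probability measure
  have hpuniv : p Set.univ = 1 := by
    have h1 : Tendsto (fun t : ℝ => p (Set.Iic t)) atTop (𝓝 (p Set.univ)) :=
      tendsto_measure_Iic_atTop p
    have h2 : Tendsto (fun t : ℝ => p (Set.Iic t)) atTop (𝓝 1) := by
      simp_rw [hp]
      have := (ENNReal.continuous_ofReal.tendsto 1).comp hF1
      simpa [Function.comp_def] using this
    exact tendsto_nhds_unique h1 h2
  haveI : IsProbabilityMeasure p := ⟨hpuniv⟩
  have hF0le : ∀ t : ℝ, 0 ≤ F t := fun t =>
    le_of_tendsto hF0 (eventually_atBot.mpr ⟨t, fun s hs => hFmono.monotone hs⟩)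
  set S : ℚ → Set (ℕ → ℝ) := fun q =>
    {x | Tendsto (fun n => (EquidistAux.cntLe x q n : ℝ) / n) atTop (𝓝 (F q))} with hSdef
  have hSet : {x : ℕ → ℝ | IsEquidistributedWRT F x} = ⋂ q : ℚ, S q := by
    ext x
    simp only [Set.mem_setOf_eq, Set.mem_iInter,
      EquidistAux.isEquidistributed_iff hFmono.monotone hFcont x, hSdef]
  have hmeasfun : ∀ (q : ℚ) (n : ℕ),
      Measurable (fun x : ℕ → ℝ => (EquidistAux.cntLe x q n : ℝ) / n) := by
    intro q n
    apply Measurable.div_const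
    have hrw : (fun x : ℕ → ℝ => ((EquidistAux.cntLe x q n : ℝ)))
        = fun x => ∑ k ∈ Finset.range n, if x k ≤ (q : ℝ) then (1 : ℝ) else 0 := by
      funext x
      rw [EquidistAux.cntLe, Finset.card_filter]
      push_cast
      rfl
    rw [hrw]
    exact Finset.measurable_sum _ fun k _ =>
      Measurable.ite (measurableSet_le (measurable_pi_apply k) measurable_const)
        measurable_const measurable_const
  have hSmeas : ∀ q : ℚ, MeasurableSet (S q) := fun q =>
    measurableSet_tendsto _ (hmeasfun q)
  have hSfull : ∀ q : ℚ, ν (S q) = 1 := by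
    intro q
    set f : ℝ → ℝ := (Set.Iic (q : ℝ)).indicator (fun _ => (1 : ℝ)) with hfdef
    have hfmeas : Measurable f := measurable_const.indicator measurableSet_Iic
    set X : ℕ → (ℕ → ℝ) → ℝ := fun k => f ∘ (fun x : ℕ → ℝ => x k) with hXdef
    have hX0 : X 0 = Set.indicator ((fun x : ℕ → ℝ => x 0) ⁻¹' Set.Iic (q : ℝ))
        (fun _ => (1 : ℝ)) := by
      funext x
      simp [hXdef, hfdef, Set.indicator, Set.mem_preimage]
    have hint : Integrable (X 0) ν := by
      rw [hX0]
      exact (integrable_const (1 : ℝ)).indicator (measurable_pi_apply 0 measurableSet_Iic)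
    have hindep : Pairwise (Function.onFun (ProbabilityTheory.IndepFun · · ν) X) := fun i j hij =>
      (EquidistAux.indep_eval hν hij).comp hfmeas hfmeas
    have hident : ∀ i, ProbabilityTheory.IdentDistrib (X i) (X 0) ν ν := fun i =>
      (EquidistAux.identDistrib_eval hν i).comp hfmeas
    have hslln := ProbabilityTheory.strong_law_ae_real X hint hindep hident
    have hE : ∫ x, X 0 x ∂ν = F q := by
      rw [hX0, integral_indicator_const _ (measurable_pi_apply 0 measurableSet_Iic),
        measureReal_def, EquidistAux.marginal hν 0 measurableSet_Iic, hp, smul_eq_mul, mul_one,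
        ENNReal.toReal_ofReal (hF0le q)]
    have hsum : ∀ (x : ℕ → ℝ) (n : ℕ),
        ∑ i ∈ Finset.range n, X i x = (EquidistAux.cntLe x q n : ℝ) := by
      intro x n
      rw [EquidistAux.cntLe]
      rw [← Finset.sum_boole]
      refine Finset.sum_congr rfl fun k _ => ?_
      simp [hXdef, hfdef, Set.indicator, Set.mem_Iic]
    have hae : ∀ᵐ x ∂ν, x ∈ S q := by
      filter_upwards [hslln] with x hx
      rw [hE] at hx
      simp only [hSdef, Set.mem_setOf_eq]
      refine hx.congr fun n => ?_
      rw [hsum]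
    rw [← prob_compl_eq_zero_iff (hSmeas q)]
    exact ae_iff.mp hae
  constructor
  · rw [hSet]
    exact MeasurableSet.iInter hSmeas
  · rw [hSet, ← prob_compl_eq_zero_iff (MeasurableSet.iInter hSmeas), Set.compl_iInter]
    exact measure_iUnion_null fun q => (prob_compl_eq_zero_iff (hSmeas q)).mpr (hSfull q)
end

section
/- Let F₁ and F₂ be distinct strictly increasing continuous distribution functions on ℝ, with associated Borel probability measures p₁ and p₂. Then the infinite power measures p₁^ℕ and p₂^ℕ on ℝ^ℕ are mutually singular (orthogonal): there exists a Borel set E ⊆ ℝ^ℕ with p₁^ℕ(E) = 1 and p₂^ℕ(E) = 0. -/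
open MeasureTheory Filter

open ProbabilityTheory

section Aux

lemma aux_pi_map_eval {n : ℕ} (p : Measure ℝ) [IsProbabilityMeasure p] (j : Fin n) :
    (Measure.pi fun _ : Fin n => p).map (fun y => y j) = p := by
  ext s hs
  rw [Measure.map_apply (measurable_pi_apply j) hs]
  have hpre : (fun y : Fin n → ℝ => y j) ⁻¹' s
      = Set.pi Set.univ (fun k => if k = j then s else Set.univ) := by
    ext y
    simp only [Set.mem_preimage, Set.mem_pi, Set.mem_univ, true_implies]
    constructor
    · intro h k
      split_ifs with hk
      · subst hk; exact h
      · trivial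
    · intro h
      simpa using h j
  rw [hpre, Measure.pi_pi]
  have h1 : ∀ k : Fin n, p (if k = j then s else Set.univ) = if k = j then p s else 1 := by
    intro k; split_ifs <;> simp
  simp_rw [h1]
  simp [Finset.prod_ite_eq']

lemma aux_pi_map_pair {n : ℕ} (p : Measure ℝ) [IsProbabilityMeasure p] (i j : Fin n)
    (hij : i ≠ j) :
    (Measure.pi fun _ : Fin n => p).map (fun y => (y i, y j)) = p.prod p := by
  classical
  refine (Measure.prod_eq fun s t hs ht => ?_).symm
  rw [Measure.map_apply ((measurable_pi_apply i).prodMk (measurable_pi_apply j)) (hs.prod ht)]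
  have hpre : (fun y : Fin n → ℝ => (y i, y j)) ⁻¹' (s ×ˢ t)
      = Set.pi Set.univ (fun k => if k = i then s else if k = j then t else Set.univ) := by
    ext y
    simp only [Set.mem_preimage, Set.mem_prod, Set.mem_pi, Set.mem_univ, true_implies]
    constructor
    · rintro ⟨h1, h2⟩ k
      split_ifs with hk1 hk2
      · subst hk1; exact h1
      · subst hk2; exact h2
      · trivial
    · intro h
      refine ⟨by simpa using h i, ?_⟩
      have := h j
      rw [if_neg (by exact fun h' => hij h'.symm), if_pos rfl] at this
      exact this
  rw [hpre, Measure.pi_pi]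
  have hprod : (∏ k : Fin n, p (if k = i then s else if k = j then t else Set.univ))
      = p s * p t := by
    rw [← Finset.prod_subset (Finset.subset_univ ({i, j} : Finset (Fin n)))
      (by
        intro k _ hk
        simp only [Finset.mem_insert, Finset.mem_singleton, not_or] at hk
        simp [hk.1, hk.2])]
    rw [Finset.prod_pair hij]
    rw [if_pos rfl, if_neg (fun h' => hij h'.symm), if_pos rfl]
  rw [hprod]

lemma isProb_of_cdf {F : ℝ → ℝ} {p : Measure ℝ}
    (hmono : StrictMono F) (h1 : Tendsto F atTop (nhds 1))
    (hp : ∀ t, p (Set.Iic t) = ENNReal.ofReal (F t)) : IsProbabilityMeasure p := by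
  constructor
  have hU : (Set.univ : Set ℝ) = ⋃ n : ℕ, Set.Iic (n : ℝ) := by
    ext x
    simp only [Set.mem_univ, true_iff, Set.mem_iUnion, Set.mem_Iic]
    obtain ⟨n, hn⟩ := exists_nat_ge x
    exact ⟨n, hn⟩
  rw [hU, Directed.measure_iUnion (Monotone.directed_le
    (fun m n hmn => Set.Iic_subset_Iic.2 (Nat.cast_le.2 hmn)))]
  simp_rw [hp]
  have hmonoseq : Monotone (fun n : ℕ => ENNReal.ofReal (F n)) := fun m n hmn =>
    ENNReal.ofReal_le_ofReal (hmono.monotone (Nat.cast_le.2 hmn))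
  have htend : Tendsto (fun n : ℕ => ENNReal.ofReal (F n)) atTop (nhds 1) := by
    have h2 := (ENNReal.continuous_ofReal.tendsto 1).comp (h1.comp tendsto_natCast_atTop_atTop)
    rw [ENNReal.ofReal_one] at h2
    exact h2
  exact tendsto_nhds_unique (tendsto_atTop_iSup hmonoseq) htend

lemma IsInfinitePower.map_eval' {p : Measure ℝ} {ν : Measure (ℕ → ℝ)}
    (h : IsInfinitePower p ν) [IsProbabilityMeasure p] (j : ℕ) :
    ν.map (fun x => x j) = p := by
  have hm : Measurable (fun x : ℕ → ℝ => fun i : Fin (j + 1) => x (i : ℕ)) :=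
    measurable_pi_lambda _ fun i => measurable_pi_apply _
  have heq : (fun x : ℕ → ℝ => x j)
      = (fun y : Fin (j + 1) → ℝ => y ⟨j, Nat.lt_succ_self j⟩)
        ∘ (fun x (i : Fin (j + 1)) => x (i : ℕ)) := rfl
  rw [heq, ← Measure.map_map (measurable_pi_apply _) hm, h.2 (j + 1), aux_pi_map_eval]

lemma IsInfinitePower.map_pair' {p : Measure ℝ} {ν : Measure (ℕ → ℝ)}
    (h : IsInfinitePower p ν) [IsProbabilityMeasure p] {i j : ℕ} (hij : i ≠ j) :
    ν.map (fun x => (x i, x j)) = p.prod p := by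
  have hi : i < max i j + 1 := lt_of_le_of_lt (le_max_left i j) (Nat.lt_succ_self _)
  have hj : j < max i j + 1 := lt_of_le_of_lt (le_max_right i j) (Nat.lt_succ_self _)
  set n := max i j + 1 with hn
  have hm : Measurable (fun x : ℕ → ℝ => fun k : Fin n => x (k : ℕ)) :=
    measurable_pi_lambda _ fun k => measurable_pi_apply _
  have heq : (fun x : ℕ → ℝ => (x i, x j))
      = (fun y : Fin n → ℝ => (y ⟨i, hi⟩, y ⟨j, hj⟩))
        ∘ (fun x (k : Fin n) => x (k : ℕ)) := rfl
  have hij' : (⟨i, hi⟩ : Fin n) ≠ ⟨j, hj⟩ := by simpa [Fin.ext_iff] using hij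
  rw [heq, ← Measure.map_map ((measurable_pi_apply _).prodMk (measurable_pi_apply _)) hm,
    h.2 n, aux_pi_map_pair p _ _ hij']

lemma slln_indicator {F : ℝ → ℝ} {p : Measure ℝ} {ν : Measure (ℕ → ℝ)}
    [IsProbabilityMeasure p] (h : IsInfinitePower p ν) (t : ℝ)
    (hp : p (Set.Iic t) = ENNReal.ofReal (F t)) (hFt : 0 ≤ F t) :
    ∀ᵐ x ∂ν, Tendsto (fun n : ℕ =>
      (∑ k ∈ Finset.range n, Set.indicator (Set.Iic t) (fun _ => (1 : ℝ)) (x k)) / n)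
      atTop (nhds (F t)) := by
  haveI := h.1
  set g : ℝ → ℝ := Set.indicator (Set.Iic t) (fun _ => (1 : ℝ)) with hg_def
  have hg : Measurable g := measurable_const.indicator measurableSet_Iic
  set X : ℕ → (ℕ → ℝ) → ℝ := fun k x => g (x k) with hX_def
  have hX0 : X 0 = Set.indicator ((fun x : ℕ → ℝ => x 0) ⁻¹' Set.Iic t) (fun _ => (1 : ℝ)) := by
    ext x
    by_cases hx : x 0 ≤ t <;> simp [hX_def, hg_def, Set.indicator_apply, hx]
  have hA : MeasurableSet ((fun x : ℕ → ℝ => x 0) ⁻¹' Set.Iic t) :=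
    measurableSet_Iic.preimage (measurable_pi_apply 0)
  have hint : Integrable (X 0) ν := by
    rw [hX0]
    exact (integrable_const (1 : ℝ)).indicator hA
  have hindep : Pairwise (Function.onFun (IndepFun · · ν) X) := by
    intro i j hij
    have hIJ : IndepFun (fun x : ℕ → ℝ => x i) (fun x => x j) ν := by
      rw [indepFun_iff_map_prod_eq_prod_map_map (measurable_pi_apply i).aemeasurable
        (measurable_pi_apply j).aemeasurable, h.map_eval' i, h.map_eval' j, h.map_pair' hij]
    exact hIJ.comp hg hg
  have hident : ∀ k, IdentDistrib (X k) (X 0) ν ν := by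
    intro k
    have hIk : IdentDistrib (fun x : ℕ → ℝ => x k) (fun x => x 0) ν ν :=
      ⟨(measurable_pi_apply k).aemeasurable, (measurable_pi_apply 0).aemeasurable,
        by rw [h.map_eval' k, h.map_eval' 0]⟩
    exact hIk.comp hg
  have hE : (∫ x, X 0 x ∂ν) = F t := by
    rw [hX0, integral_indicator_const (1 : ℝ) hA]
    have hν0 : ν ((fun x : ℕ → ℝ => x 0) ⁻¹' Set.Iic t) = ENNReal.ofReal (F t) := by
      rw [← Measure.map_apply (measurable_pi_apply 0) measurableSet_Iic, h.map_eval' 0, hp]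
    rw [measureReal_def, hν0]
    simp [ENNReal.toReal_ofReal hFt]
  have hSLLN := strong_law_ae_real X hint hindep hident
  rw [hE] at hSLLN
  exact hSLLN

end Aux

/-- The infinite powers of two Borel probability measures on `ℝ` given by distinct
strictly increasing continuous distribution functions are mutually singular. -/
theorem infinitePowers_orthogonal
    (F₁ F₂ : ℝ → ℝ) (h₁mono : StrictMono F₁) (h₁cont : Continuous F₁)
    (h₁0 : Tendsto F₁ atBot (nhds 0)) (h₁1 : Tendsto F₁ atTop (nhds 1))
    (h₂mono : StrictMono F₂) (h₂cont : Continuous F₂)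
    (h₂0 : Tendsto F₂ atBot (nhds 0)) (h₂1 : Tendsto F₂ atTop (nhds 1))
    (hne : F₁ ≠ F₂)
    (p₁ p₂ : Measure ℝ)
    (hp₁ : ∀ t, p₁ (Set.Iic t) = ENNReal.ofReal (F₁ t))
    (hp₂ : ∀ t, p₂ (Set.Iic t) = ENNReal.ofReal (F₂ t))
    (ν₁ ν₂ : Measure (ℕ → ℝ))
    (hν₁ : IsInfinitePower p₁ ν₁) (hν₂ : IsInfinitePower p₂ ν₂) :
    ∃ E : Set (ℕ → ℝ), MeasurableSet E ∧ ν₁ E = 1 ∧ ν₂ E = 0 := by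
  obtain ⟨t, ht⟩ := Function.ne_iff.mp hne
  haveI := hν₁.1
  haveI := hν₂.1
  haveI := isProb_of_cdf h₁mono h₁1 hp₁
  haveI := isProb_of_cdf h₂mono h₂1 hp₂
  have hF₁t : 0 ≤ F₁ t :=
    le_of_tendsto h₁0 (eventually_atBot.2 ⟨t, fun s hs => h₁mono.monotone hs⟩)
  have hF₂t : 0 ≤ F₂ t :=
    le_of_tendsto h₂0 (eventually_atBot.2 ⟨t, fun s hs => h₂mono.monotone hs⟩)
  have h1 := slln_indicator hν₁ t (hp₁ t) hF₁t
  have h2 := slln_indicator hν₂ t (hp₂ t) hF₂t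
  set f : ℕ → (ℕ → ℝ) → ℝ := fun n x =>
    (∑ k ∈ Finset.range n, Set.indicator (Set.Iic t) (fun _ => (1 : ℝ)) (x k)) / n with hf_def
  have hfm : ∀ n, Measurable (f n) := fun n =>
    (Finset.measurable_sum _ fun k _ =>
      (measurable_const.indicator measurableSet_Iic).comp (measurable_pi_apply k)).div_const _
  have hE : MeasurableSet {x : ℕ → ℝ | Tendsto (fun n => f n x) atTop (nhds (F₁ t))} :=
    measurableSet_tendsto _ hfm
  refine ⟨{x | Tendsto (fun n => f n x) atTop (nhds (F₁ t))}, hE, ?_, ?_⟩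
  · rw [← prob_compl_eq_zero_iff hE, Set.compl_setOf]
    exact ae_iff.mp h1
  · have hsub : {x : ℕ → ℝ | Tendsto (fun n => f n x) atTop (nhds (F₁ t))}
        ⊆ {x | ¬ Tendsto (fun n => f n x) atTop (nhds (F₂ t))} := by
      intro x hx hx2
      exact ht (tendsto_nhds_unique hx hx2)
    exact measure_mono_null hsub (ae_iff.mp h2)
end
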